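/- arXiv:2003.10683 — 2 statements merged into one kernel-verified Lean document; each statement's English description precedes it below -/
import Mathlib

section
/- Let C be a triangulated category and let B be a strictly full triangulated subcategory of C. If B is idempotent complete (every idempotent endomorphism in B splits), then B is thick in C, i.e. B is closed under direct summands: whenever an object X of B decomposes as X ≅ Y ⊕ Z in C, both Y and Z belong to B. -/
open CategoryTheory CategoryTheory.Limits CategoryTheory.Pretriangulated

universe v u

private lemma summand_mem {C : Type u} [Category.{v} C] [Preadditive C]
    (B : Set C)
    (hiso : ∀ ⦃X Y : C⦄, (X ≅ Y) → X ∈ B → Y ∈ B)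
    (hidem : ∀ A : C, A ∈ B → ∀ p : A ⟶ A, p ≫ p = p →
      ∃ (Y : C) (_ : Y ∈ B) (r : A ⟶ Y) (s : Y ⟶ A), r ≫ s = p ∧ s ≫ r = 𝟙 Y)
    (X Y : C) (hX : X ∈ B) (i : Y ⟶ X) (p : X ⟶ Y) (hip : i ≫ p = 𝟙 Y) : Y ∈ B := by
  have hq : (p ≫ i) ≫ (p ≫ i) = p ≫ i := by
    rw [Category.assoc, ← Category.assoc i p i, hip, Category.id_comp]
  obtain ⟨W, hW, r, s, hrs, hsr⟩ := hidem X hX (p ≫ i) hq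
  refine hiso ?_ hW
  refine ⟨s ≫ p, i ≫ r, ?_, ?_⟩
  · have : s ≫ (p ≫ i) ≫ r = 𝟙 W := by
      rw [← hrs]; simp only [← Category.assoc]; rw [hsr]; simp [hsr]
    simpa using this
  · have : i ≫ (r ≫ s) ≫ p = 𝟙 Y := by
      rw [hrs]; simp only [← Category.assoc]; rw [hip]; simp [hip]
    simpa using this

/-- Let `C` be a triangulated category and `B` a strictly full triangulated
subcategory of `C` (given as a set of objects: closed under isomorphisms, containing the zero
objects, closed under shifts, and closed under extensions by distinguished triangles).
If `B` is idempotent complete (every idempotent endomorphism of an object of `B` splits through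
an object of `B`), then `B` is thick: whenever an object `X` of `B` decomposes as a direct sum
`X ≅ Y ⊕ Z` in `C` (witnessed by a biproduct diagram), both `Y` and `Z` belong to `B`. -/
theorem ekedahl_inv_stmt0 {C : Type u} [Category.{v} C] [HasZeroObject C] [HasShift C ℤ]
    [Preadditive C] [∀ n : ℤ, (shiftFunctor C n).Additive] [Pretriangulated C]
    (B : Set C)
    -- `B` is strictly full (closed under isomorphisms)
    (hiso : ∀ ⦃X Y : C⦄, (X ≅ Y) → X ∈ B → Y ∈ B)
    -- `B` is a triangulated subcategory
    (hzero : ∀ X : C, IsZero X → X ∈ B)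
    (hshift : ∀ (X : C) (n : ℤ), X ∈ B → X⟦n⟧ ∈ B)
    (hext : ∀ T : Triangle C, T ∈ distinguishedTriangles →
      T.obj₁ ∈ B → T.obj₂ ∈ B → T.obj₃ ∈ B)
    -- `B` is idempotent complete
    (hidem : ∀ A : C, A ∈ B → ∀ p : A ⟶ A, p ≫ p = p →
      ∃ (Y : C) (_ : Y ∈ B) (r : A ⟶ Y) (s : Y ⟶ A), r ≫ s = p ∧ s ≫ r = 𝟙 Y) :
    -- then `B` is thick: closed under direct summands
    ∀ (X Y Z : C), X ∈ B →
      ∀ (iY : Y ⟶ X) (iZ : Z ⟶ X) (pY : X ⟶ Y) (pZ : X ⟶ Z),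
        iY ≫ pY = 𝟙 Y → iZ ≫ pZ = 𝟙 Z → iY ≫ pZ = 0 → iZ ≫ pY = 0 →
        pY ≫ iY + pZ ≫ iZ = 𝟙 X → Y ∈ B ∧ Z ∈ B := by
  intro X Y Z hX iY iZ pY pZ hY hZ _ _ _
  exact ⟨summand_mem B hiso hidem X Y hX iY pY hY,
         summand_mem B hiso hidem X Z hX iZ pZ hZ⟩
end

section
/- Let C be a triangulated category and let B be a full additive subcategory of C that is negative, whose objects densely generate C, and which is idempotent complete. Then the heart of the weight structure w on C determined by B (the unique weight structure whose heart is Kar_C(B)) equals B itself. -/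
open CategoryTheory CategoryTheory.Limits CategoryTheory.Pretriangulated

universe v u

variable {C : Type u} [Category.{v} C] [HasZeroObject C] [HasShift C ℤ]
  [Preadditive C] [∀ n : ℤ, (shiftFunctor C n).Additive] [Pretriangulated C]

/-- `X` is a retract (equivalently, direct summand) of `W`. -/
def IsRetractOf (X W : C) : Prop := ∃ (i : X ⟶ W) (r : W ⟶ X), i ≫ r = 𝟙 X

/-- The shift `S[j]` of a set of objects: objects isomorphic to `Y⟦j⟧` with `Y ∈ S`. -/
def shiftSet (S : Set C) (j : ℤ) : Set C := {X | ∃ Y ∈ S, Nonempty (X ≅ Y⟦j⟧)}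

/-- The envelope of a set `S` of objects: the smallest full subcategory of `C` containing `S`
which is extension-closed (contains the zero objects and is closed under extensions by
distinguished triangles) and thick (closed under retracts). -/
def envelope (S : Set C) : Set C :=
  ⋂₀ {T : Set C | S ⊆ T ∧ (∀ X : C, IsZero X → X ∈ T) ∧
      (∀ Tr : Triangle C, Tr ∈ distinguishedTriangles → Tr.obj₁ ∈ T → Tr.obj₃ ∈ T →
        Tr.obj₂ ∈ T) ∧
      (∀ X W : C, W ∈ T → IsRetractOf X W → X ∈ T)}

/-- `Kar_C(B)`: the smallest retraction-closed full subcategory of `C` containing `B`. -/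
def karClosure (B : Set C) : Set C :=
  ⋂₀ {T : Set C | B ⊆ T ∧ ∀ X W : C, W ∈ T → IsRetractOf X W → X ∈ T}

variable (C) in
/-- A weight structure `w = (C^{w≤0}, C^{w≥0})` on the triangulated category `C`
(cohomological convention):
`le` is `C^{w≤0}` and `ge` is `C^{w≥0}`, with `C^{w≤n} := C^{w≤0}[-n]`, `C^{w≥n} := C^{w≥0}[-n]`;
(1) both classes are strictly full, additive and Karoubi-closed (closed under retracts) in `C`;
(2) `C^{w≥1} ⊆ C^{w≥0}` and `C^{w≤0} ⊆ C^{w≤1}` (equivalently, by strict fullness, `le` is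
closed under `⟦1⟧` and `ge` is closed under `⟦-1⟧`);
(3) `Hom(X, Y) = 0` for `X ∈ C^{w≤0}` and `Y ∈ C^{w≥1}`;
(4) every `X` fits in a distinguished triangle `B⟦-1⟧ → X → A → B` with
`A ∈ C^{w≤0}` and `B ∈ C^{w≥0}`. -/
structure WeightStructure where
  le : Set C
  ge : Set C
  le_iso : ∀ ⦃X Y : C⦄, (X ≅ Y) → X ∈ le → Y ∈ le
  ge_iso : ∀ ⦃X Y : C⦄, (X ≅ Y) → X ∈ ge → Y ∈ ge
  le_zero : ∀ X : C, IsZero X → X ∈ le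
  ge_zero : ∀ X : C, IsZero X → X ∈ ge
  le_sum : ∀ ⦃W X Y : C⦄, X ∈ le → Y ∈ le →
    ∀ (iX : X ⟶ W) (iY : Y ⟶ W) (pX : W ⟶ X) (pY : W ⟶ Y),
      iX ≫ pX = 𝟙 X → iY ≫ pY = 𝟙 Y → pX ≫ iX + pY ≫ iY = 𝟙 W → W ∈ le
  ge_sum : ∀ ⦃W X Y : C⦄, X ∈ ge → Y ∈ ge →
    ∀ (iX : X ⟶ W) (iY : Y ⟶ W) (pX : W ⟶ X) (pY : W ⟶ Y),
      iX ≫ pX = 𝟙 X → iY ≫ pY = 𝟙 Y → pX ≫ iX + pY ≫ iY = 𝟙 W → W ∈ ge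
  le_retract : ∀ ⦃X W : C⦄, W ∈ le → IsRetractOf X W → X ∈ le
  ge_retract : ∀ ⦃X W : C⦄, W ∈ ge → IsRetractOf X W → X ∈ ge
  le_shift : ∀ X : C, X ∈ le → X⟦(1 : ℤ)⟧ ∈ le
  ge_shift : ∀ X : C, X ∈ ge → X⟦(-1 : ℤ)⟧ ∈ ge
  orth : ∀ ⦃X Y : C⦄, X ∈ le → Y ∈ ge → ∀ f : X ⟶ Y⟦(-1 : ℤ)⟧, f = 0
  decomp : ∀ X : C, ∃ A B : C, A ∈ le ∧ B ∈ ge ∧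
    ∃ (f : B⟦(-1 : ℤ)⟧ ⟶ X) (g : X ⟶ A) (h : A ⟶ B⟦(-1 : ℤ)⟧⟦(1 : ℤ)⟧),
      Triangle.mk f g h ∈ distinguishedTriangles

private lemma retract_splitting_iso {X Y Z : C} (i' : X ⟶ Y) (r' : Y ⟶ X)
    (hir' : i' ≫ r' = 𝟙 X) (s : Y ⟶ Z) (t : Z ⟶ Y) (hst : s ≫ t = r' ≫ i')
    (hts : t ≫ s = 𝟙 Z) :
    (i' ≫ s) ≫ (t ≫ r') = 𝟙 X ∧ (t ≫ r') ≫ (i' ≫ s) = 𝟙 Z := by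
  constructor
  · calc (i' ≫ s) ≫ (t ≫ r') = i' ≫ (s ≫ t) ≫ r' := by simp
      _ = (i' ≫ r') ≫ (i' ≫ r') := by rw [hst]; simp
      _ = 𝟙 X := by rw [hir']; simp
  · calc (t ≫ r') ≫ (i' ≫ s) = t ≫ (r' ≫ i') ≫ s := by simp
      _ = (t ≫ s) ≫ (t ≫ s) := by rw [← hst]; simp
      _ = 𝟙 Z := by rw [hts]; simp

/-- Let `B` be a full additive subcategory of `C` which is negative, whose
objects densely generate `C`, and which is idempotent complete. Then the heart of the weight
structure on `C` determined by `B` (the unique weight structure whose heart is `Kar_C(B)`)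
equals `B` itself. -/
theorem heart_eq_of_idempotentComplete (B : Set C)
    -- `B` is an additive subcategory: contains the zero objects and is closed under
    -- finite direct sums
    (hB_zero : ∀ X : C, IsZero X → X ∈ B)
    (hB_sum : ∀ ⦃W X Y : C⦄, X ∈ B → Y ∈ B →
      ∀ (iX : X ⟶ W) (iY : Y ⟶ W) (pX : W ⟶ X) (pY : W ⟶ Y),
        iX ≫ pX = 𝟙 X → iY ≫ pY = 𝟙 Y → pX ≫ iX + pY ≫ iY = 𝟙 W → W ∈ B)
    -- `B` is negative: `Hom(X, Y⟦i⟧) = 0` for `X, Y ∈ B` and `i > 0`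
    (hB_neg : ∀ ⦃X Y : C⦄, X ∈ B → Y ∈ B → ∀ i : ℤ, 0 < i → ∀ f : X ⟶ Y⟦i⟧, f = 0)
    -- the objects of `B` densely generate `C`
    (hB_gen : ∀ X : C, X ∈ envelope {Z : C | ∃ j : ℤ, Z ∈ shiftSet B j})
    -- `B` is idempotent complete: every idempotent endomorphism of an object of `B`
    -- splits through an object of `B`
    (hB_idem : ∀ A : C, A ∈ B → ∀ p : A ⟶ A, p ≫ p = p →
      ∃ (Y : C) (_ : Y ∈ B) (r : A ⟶ Y) (s : Y ⟶ A), r ≫ s = p ∧ s ≫ r = 𝟙 Y) :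
    ∀ w : WeightStructure C, w.le ∩ w.ge = karClosure B → w.le ∩ w.ge = B := by
  intro w hw
  -- B is closed under isomorphism, using hB_sum with a zero summand
  have hB_iso : ∀ ⦃X Y : C⦄, (X ≅ Y) → X ∈ B → Y ∈ B := by
    intro X Y e hX
    obtain ⟨Z0, hZ0⟩ := HasZeroObject.zero (C := C)
    refine hB_sum hX (hB_zero Z0 hZ0) e.hom (0 : Z0 ⟶ Y) e.inv 0 (by simp)
      (hZ0.eq_of_src _ _) ?_
    simp
  -- The iso-closure of B is a retract-closed set containing B
  have hT : karClosure B ⊆ B := by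
    intro X hX
    have hXT : X ∈ {X : C | ∃ Y ∈ B, Nonempty (X ≅ Y)} := by
      refine hX _ ⟨fun Y hY => ⟨Y, hY, ⟨Iso.refl Y⟩⟩, ?_⟩
      rintro X W ⟨Y, hY, ⟨e⟩⟩ ⟨i, r, hir⟩
      have hir' : (i ≫ e.hom) ≫ (e.inv ≫ r) = 𝟙 X := by
        rw [Category.assoc, ← Category.assoc e.hom, e.hom_inv_id, Category.id_comp, hir]
      set i' := i ≫ e.hom
      set r' := e.inv ≫ r
      have hp : (r' ≫ i') ≫ (r' ≫ i') = r' ≫ i' := by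
        rw [Category.assoc, ← Category.assoc i', hir', Category.id_comp]
      obtain ⟨Z, hZ, s, t, hst, hts⟩ := hB_idem Y hY (r' ≫ i') hp
      obtain ⟨h1, h2⟩ := retract_splitting_iso i' r' hir' s t hst hts
      exact ⟨Z, hZ, ⟨⟨i' ≫ s, t ≫ r', h1, h2⟩⟩⟩
    obtain ⟨Y, hY, ⟨e⟩⟩ := hXT
    exact hB_iso e.symm hY
  rw [hw]
  apply Set.Subset.antisymm hT
  intro X hX T hT'
  exact hT'.1 hX
end
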